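/- Let G be a locally compact metrizable group with left-invariant metric ρ and left Haar measure ν satisfying the doubling condition, let K be a compact subgroup of G with G ≠ K, and let q ∈ (1,∞]. Then the Hardy space H^{1,q}(G/K) is nontrivial (contains a nonzero element) and is a Banach space with the norm ‖f‖ = inf Σ|λ_j| over atomic decompositions. -/

import Mathlib

/-!
Statement 3 (Proposition 1 of the paper).

`G` is a locally compact metrizable group with left-invariant metric (hypothesis `hleft`)
and left Haar measure `ν` satisfying the doubling condition; `K` is a compact subgroup with
`G ≠ K`.  Then the Hardy space `H^{1,q}(G/K)` (defined by atomic decompositions into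
right-`K`-invariant `(1,q)`-atoms, with the norm `‖f‖ = inf ∑ |λ_j|`, encoded below by
`hardyNorm`, which is `∞` exactly off `H^{1,q}(G/K)`) is nontrivial and is a Banach space:
the conclusion records nontriviality, the norm axioms (subadditivity, absolute homogeneity,
and definiteness up to `λ`-a.e. equality, where `λ = ν.map QuotientGroup.mk` is the invariant
measure on `G/K` given by Weil's formula), and completeness in the form of the
"absolutely convergent series converge" criterion.
-/

open MeasureTheory Metric Filter Topology ENNReal NNReal

open Pointwise

noncomputable section

namespace Stmt3

variable {G : Type*} [Group G] [MetricSpace G] [IsTopologicalGroup G]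
  [MeasurableSpace G] [BorelSpace G] [LocallyCompactSpace G]

/-- A `(1,q)`-atom on `G` (with `q ∈ (1,∞]` represented by `q : ℝ≥0∞`). -/
def IsAtom1q (ν : Measure G) (q : ℝ≥0∞) (a : G → ℂ) : Prop :=
  AEStronglyMeasurable a ν ∧
    ((∃ (x : G) (r : ℝ), 0 < r ∧ Function.support a ⊆ ball x r ∧
        eLpNorm a q ν ≤ ν (ball x r) ^ (1 / q.toReal - 1) ∧
        ∫ y, a y ∂ν = 0) ∨
      (ν Set.univ = 1 ∧ a = fun _ => (1 : ℂ)))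

/-- Right-`K`-invariance of a function on `G`. -/
def RightInvariant (K : Subgroup G) (a : G → ℂ) : Prop :=
  ∀ (x : G), ∀ k ∈ K, a (x * k) = a x

/-- The atomic `H^{1,q}(G/K)` norm. -/
def hardyNorm (ν : Measure G) (K : Subgroup G) (q : ℝ≥0∞) (f : G ⧸ K → ℂ) : ℝ≥0∞ :=
  ⨅ (c : ℕ → ℂ) (a : ℕ → G → ℂ) (_ : ∀ j, IsAtom1q ν q (a j))
    (_ : ∀ j, RightInvariant K (a j)) (_ : Summable fun j => ‖c j‖)
    (_ : ∀ᵐ x ∂ν, f (QuotientGroup.mk x) = ∑' j, c j * a j x),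
      ENNReal.ofReal (∑' j, ‖c j‖)

lemma ofReal_norm_eq_coe_nnnorm {E : Type*} [SeminormedAddGroup E] (a : E) :
    ENNReal.ofReal ‖a‖ = (‖a‖₊ : ℝ≥0∞) := ofReal_norm a

section Aux

variable {G : Type*} [Group G] [MetricSpace G] [IsTopologicalGroup G]
  [MeasurableSpace G] [BorelSpace G] [LocallyCompactSpace G]
variable (ν : Measure G) [ν.IsHaarMeasure]

/-- Haar measure of a metric ball only depends on the radius. -/
lemma meas_ball_eq (hleft : ∀ g x y : G, dist (g * x) (g * y) = dist x y) (x : G) (r : ℝ) :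
    ν (ball x r) = ν (ball 1 r) := by
  have hset : ball x r = (fun y => x⁻¹ * y) ⁻¹' (ball 1 r) := by
    ext y
    simp only [mem_ball, Set.mem_preimage]
    have h : dist (x⁻¹ * y) 1 = dist y x := by
      conv_lhs => rw [show (1 : G) = x⁻¹ * x by rw [inv_mul_cancel]]
      rw [hleft]
    rw [h]
  rw [hset, measure_preimage_mul]

/-- With the doubling condition all balls have finite measure. -/
lemma ball_lt_top (hleft : ∀ g x y : G, dist (g * x) (g * y) = dist x y)
    (C : ℝ) (hC : ∀ (x : G) (r : ℝ), 0 < r →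
      ν (ball x (2 * r)) ≤ ENNReal.ofReal C * ν (ball x r)) :
    ∀ (x : G) (r : ℝ), ν (ball x r) < ⊤ := by
  obtain ⟨s, hsc, hsn⟩ := exists_compact_mem_nhds (1 : G)
  obtain ⟨r₀, hr₀, hball⟩ := Metric.mem_nhds_iff.mp hsn
  have base : ν (ball 1 r₀) < ⊤ := lt_of_le_of_lt (measure_mono hball) hsc.measure_lt_top
  have step : ∀ n : ℕ, ν (ball (1 : G) (2 ^ n * r₀)) < ⊤ := by
    intro n
    induction n with
    | zero => simpa using base
    | succ n ih =>
      have h2 : (2 : ℝ) ^ (n + 1) * r₀ = 2 * (2 ^ n * r₀) := by ring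
      have h3 := hC 1 (2 ^ n * r₀) (by positivity)
      rw [h2]
      exact lt_of_le_of_lt h3 (ENNReal.mul_lt_top ENNReal.ofReal_lt_top ih)
  intro x r
  rw [meas_ball_eq ν hleft]
  obtain ⟨n, hn⟩ := pow_unbounded_of_one_lt (r / r₀) (one_lt_two (α := ℝ))
  have hrle : r ≤ 2 ^ n * r₀ := by
    rw [div_lt_iff₀ hr₀] at hn
    nlinarith
  exact lt_of_le_of_lt (measure_mono (ball_subset_ball hrle)) (step n)

/-- A group with an invariant metric carrying a doubling Haar measure is second countable. -/
lemma secondCountable_of_doubling (hleft : ∀ g x y : G, dist (g * x) (g * y) = dist x y)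
    (C : ℝ) (hC : ∀ (x : G) (r : ℝ), 0 < r →
      ν (ball x (2 * r)) ≤ ENNReal.ofReal C * ν (ball x r)) :
    SecondCountableTopology G := by
  classical
  have hfin := ball_lt_top ν hleft C hC
  have htb : ∀ R : ℝ, TotallyBounded (ball (1 : G) R) := by
    intro R
    rw [Metric.totallyBounded_iff]
    by_contra hcon
    push_neg at hcon
    obtain ⟨ε, hε, hcov⟩ := hcon
    have H : ∀ s : Finset G, ∃ z, z ∈ ball (1 : G) R ∧ ∀ y ∈ s, ε ≤ dist z y := by
      intro s
      have h1 := hcov (↑s) s.finite_toSet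
      rw [Set.not_subset] at h1
      obtain ⟨z, hz1, hz2⟩ := h1
      refine ⟨z, hz1, fun y hy => ?_⟩
      by_contra h
      push_neg at h
      exact hz2 (Set.mem_biUnion (Finset.mem_coe.mpr hy) (mem_ball.mpr h))
    let zf : Finset G → G := fun s => (H s).choose
    let S : ℕ → Finset G := fun n => Nat.rec (∅ : Finset G) (fun _ s => insert (zf s) s) n
    have hS : ∀ n, S (n + 1) = insert (zf (S n)) (S n) := fun n => rfl
    set x : ℕ → G := fun n => zf (S n) with hxdef
    have hx1 : ∀ n, x n ∈ ball (1 : G) R := fun n => (H (S n)).choose_spec.1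
    have hx2 : ∀ n, ∀ y ∈ S n, ε ≤ dist (x n) y := fun n => (H (S n)).choose_spec.2
    have hmem : ∀ m n, m < n → x m ∈ S n := by
      intro m n h
      induction n with
      | zero => omega
      | succ n ih =>
        rw [hS]
        rcases Nat.lt_succ_iff_lt_or_eq.mp h with h' | h'
        · exact Finset.mem_insert_of_mem (ih h')
        · subst h'
          exact Finset.mem_insert_self _ _
    have hsep : ∀ m n, m < n → ε ≤ dist (x n) (x m) := fun m n h => hx2 n _ (hmem m n h)
    set m₀ := ν (ball (1 : G) (ε / 2)) with hm₀
    have hm₀pos : 0 < m₀ := IsOpen.measure_pos ν isOpen_ball ⟨1, mem_ball_self (by linarith)⟩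
    have hR : 0 < R := by
      obtain ⟨z, hz, -⟩ := H ∅
      exact lt_of_le_of_lt dist_nonneg (mem_ball.mp hz)
    have hcount : ∀ n : ℕ, (n : ℝ≥0∞) * m₀ ≤ ν (ball (1 : G) (R + ε)) := by
      intro n
      have hdisj : ∀ i j : ℕ, i ≠ j → Disjoint (ball (x i) (ε / 2)) (ball (x j) (ε / 2)) := by
        have key : ∀ i j : ℕ, i < j → Disjoint (ball (x i) (ε / 2)) (ball (x j) (ε / 2)) := by
          intro i j hij
          rw [Set.disjoint_left]
          intro w hwi hwj
          have hlt : dist (x j) (x i) < ε := by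
            have h1 := mem_ball.mp hwi
            have h2 := mem_ball.mp hwj
            calc dist (x j) (x i) ≤ dist (x j) w + dist w (x i) := dist_triangle _ _ _
              _ < ε / 2 + ε / 2 := by rw [dist_comm (x j) w]; linarith
              _ = ε := by ring
          exact absurd hlt (not_lt.mpr (hsep i j hij))
        intro i j hij
        rcases lt_or_gt_of_ne hij with h | h
        · exact key i j h
        · exact (key j i h).symm
      have hsum : ν (⋃ i ∈ Finset.range n, ball (x i) (ε / 2)) =
          ∑ i ∈ Finset.range n, ν (ball (x i) (ε / 2)) :=
        measure_biUnion_finset (fun i _ j _ hij => hdisj i j hij) (fun i _ => measurableSet_ball)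
      have hsub : (⋃ i ∈ Finset.range n, ball (x i) (ε / 2)) ⊆ ball (1 : G) (R + ε) := by
        intro w hw
        simp only [Set.mem_iUnion] at hw
        obtain ⟨i, -, hwi⟩ := hw
        have h1 := mem_ball.mp hwi
        have h2 := mem_ball.mp (hx1 i)
        rw [mem_ball]
        calc dist w 1 ≤ dist w (x i) + dist (x i) 1 := dist_triangle _ _ _
          _ < ε / 2 + R := by linarith
          _ ≤ R + ε := by linarith
      calc (n : ℝ≥0∞) * m₀ = ∑ _i ∈ Finset.range n, m₀ := by
            rw [Finset.sum_const, Finset.card_range, nsmul_eq_mul]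
        _ = ∑ i ∈ Finset.range n, ν (ball (x i) (ε / 2)) := by
            refine Finset.sum_congr rfl fun i _ => ?_
            exact hm₀.trans (meas_ball_eq ν hleft (x i) (ε / 2)).symm
        _ = ν (⋃ i ∈ Finset.range n, ball (x i) (ε / 2)) := hsum.symm
        _ ≤ ν (ball (1 : G) (R + ε)) := measure_mono hsub
    have hBfin : ν (ball (1 : G) (R + ε)) ≠ ⊤ := (hfin _ _).ne
    have hm₀top : m₀ ≠ ⊤ := (hfin _ _).ne
    obtain ⟨n, hn⟩ := ENNReal.exists_nat_gt (ENNReal.div_lt_top hBfin hm₀pos.ne').ne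
    have hlt : ν (ball (1 : G) (R + ε)) < (n : ℝ≥0∞) * m₀ := by
      rwa [ENNReal.div_lt_iff (Or.inl hm₀pos.ne') (Or.inl hm₀top)] at hn
    exact absurd (hcount n) (not_le.mpr hlt)
  have hsepa : ∀ n : ℕ, TopologicalSpace.IsSeparable (ball (1 : G) (n : ℝ)) :=
    fun n => (htb n).isSeparable
  have huniv : TopologicalSpace.IsSeparable (Set.univ : Set G) := by
    have hU : (Set.univ : Set G) = ⋃ n : ℕ, ball (1 : G) (n : ℝ) := by
      ext w
      simp only [Set.mem_univ, true_iff, Set.mem_iUnion, mem_ball]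
      obtain ⟨n, hn⟩ := exists_nat_gt (dist w 1)
      exact ⟨n, hn⟩
    rw [hU]
    exact TopologicalSpace.IsSeparable.iUnion hsepa
  haveI : TopologicalSpace.SeparableSpace G := TopologicalSpace.isSeparable_univ_iff.mp huniv
  exact UniformSpace.secondCountable_of_separable G

/-- `(1,q)`-atoms are bounded in `L¹`. -/
lemma atom_lintegral_le (hfin : ∀ (x : G) (r : ℝ), ν (ball x r) < ⊤) {q : ℝ≥0∞} (hq : 1 < q)
    {a : G → ℂ} (ha : IsAtom1q ν q a) : ∫⁻ y, (‖a y‖₊ : ℝ≥0∞) ∂ν ≤ 1 := by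
  obtain ⟨hmeas, hcase⟩ := ha
  rcases hcase with ⟨x, r, hr, hsupp, hnorm, -⟩ | ⟨huniv, rfl⟩
  · set B := ball x r with hB
    have hBm : MeasurableSet B := measurableSet_ball
    have hB0 : ν B ≠ 0 := (IsOpen.measure_pos ν isOpen_ball ⟨x, mem_ball_self hr⟩).ne'
    have hBt : ν B ≠ ⊤ := (hfin x r).ne
    have hzero : ∀ y, y ∉ B → a y = 0 := by
      intro y hy
      by_contra h
      exact hy (hsupp (Function.mem_support.mpr h))
    have h1 : ∫⁻ y, (‖a y‖₊ : ℝ≥0∞) ∂ν = eLpNorm a 1 (ν.restrict B) := by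
      have e1 : eLpNorm a 1 (ν.restrict B) = ∫⁻ y, (‖a y‖₊ : ℝ≥0∞) ∂(ν.restrict B) :=
        eLpNorm_one_eq_lintegral_enorm
      rw [e1, ← lintegral_indicator hBm]
      apply lintegral_congr
      intro y
      by_cases hy : y ∈ B
      · simp [Set.indicator_of_mem hy]
      · simp [Set.indicator_of_notMem hy, hzero y hy]
    have h2 : eLpNorm a 1 (ν.restrict B) ≤ eLpNorm a q (ν.restrict B) *
        (ν.restrict B) Set.univ ^ (1 / (1 : ℝ≥0∞).toReal - 1 / q.toReal) :=
      eLpNorm_le_eLpNorm_mul_rpow_measure_univ hq.le hmeas.restrict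
    rw [Measure.restrict_apply_univ] at h2
    have h3 : eLpNorm a q (ν.restrict B) ≤ ν B ^ (1 / q.toReal - 1) :=
      le_trans (eLpNorm_mono_measure a Measure.restrict_le_self) hnorm
    have h4 : eLpNorm a 1 (ν.restrict B) ≤
        ν B ^ (1 / q.toReal - 1) * ν B ^ (1 - 1 / q.toReal) := by
      refine le_trans h2 (mul_le_mul' h3 (le_of_eq ?_))
      congr 1
      simp [ENNReal.toReal_one]
    rw [h1]
    refine le_trans h4 ?_
    rw [← ENNReal.rpow_add _ _ hB0 hBt]
    have hexp : 1 / q.toReal - 1 + (1 - 1 / q.toReal) = 0 := by ring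
    rw [hexp, ENNReal.rpow_zero]
  · simp only [nnnorm_one, ENNReal.coe_one]
    rw [lintegral_one, huniv]

end Aux

section Aux2

variable {G : Type*} [Group G] [MetricSpace G] [IsTopologicalGroup G]
  [MeasurableSpace G] [BorelSpace G] [LocallyCompactSpace G]
variable (ν : Measure G) [ν.IsHaarMeasure] {K : Subgroup G} {q : ℝ≥0∞}

lemma hardyNorm_le_decomp {f : G ⧸ K → ℂ} {c : ℕ → ℂ} {a : ℕ → G → ℂ}
    (h1 : ∀ j, IsAtom1q ν q (a j)) (h2 : ∀ j, RightInvariant K (a j))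
    (h3 : Summable fun j => ‖c j‖)
    (h4 : ∀ᵐ x ∂ν, f (QuotientGroup.mk x) = ∑' j, c j * a j x) :
    hardyNorm ν K q f ≤ ENNReal.ofReal (∑' j, ‖c j‖) :=
  iInf_le_of_le c <| iInf_le_of_le a <| iInf_le_of_le h1 <| iInf_le_of_le h2 <|
    iInf_le_of_le h3 <| iInf_le_of_le h4 le_rfl

lemma zero_isAtom : IsAtom1q ν q (fun _ : G => (0 : ℂ)) := by
  refine ⟨aestronglyMeasurable_const, Or.inl ⟨1, 1, one_pos, ?_, ?_, by simp⟩⟩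
  · simp [Function.support_subset_iff']
  · rw [eLpNorm_zero']
    exact zero_le

lemma hardyNorm_eq_zero_of_ae {f : G ⧸ K → ℂ} (hf : ∀ᵐ x ∂ν, f (QuotientGroup.mk x) = 0) :
    hardyNorm ν K q f = 0 := by
  refine le_antisymm ?_ (zero_le)
  have h := hardyNorm_le_decomp ν (q := q) (f := f) (c := fun _ => 0)
    (a := fun _ => fun _ => 0)
    (fun _ => zero_isAtom ν (q := q)) (fun _ _ _ _ => rfl) (by simpa using summable_zero) ?_
  · simpa using h
  · filter_upwards [hf] with x hx
    simp [hx]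

lemma exists_decomp_lt {f : G ⧸ K → ℂ} {t : ℝ≥0∞} (h : hardyNorm ν K q f < t) :
    ∃ (c : ℕ → ℂ) (a : ℕ → G → ℂ), (∀ j, IsAtom1q ν q (a j)) ∧ (∀ j, RightInvariant K (a j)) ∧
      (Summable fun j => ‖c j‖) ∧ (∀ᵐ x ∂ν, f (QuotientGroup.mk x) = ∑' j, c j * a j x) ∧
      ENNReal.ofReal (∑' j, ‖c j‖) < t := by
  simp only [hardyNorm, iInf_lt_iff] at h
  obtain ⟨c, a, h1, h2, h3, h4, h5⟩ := h
  exact ⟨c, a, h1, h2, h3, h4, h5⟩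

/-- An auxiliary equivalence, kept opaque to avoid defeq blowups. -/
def pairEquiv : ℕ ≃ ℕ × ℕ := (Denumerable.eqv (ℕ × ℕ)).symm

set_option maxHeartbeats 1000000 in
/-- The master lemma: a countable family with summable Hardy norms admits a common
atomic decomposition of its sum, with coefficient sum within `δ` of the norm sum. -/
lemma master (hfin' : ∀ (x : G) (r : ℝ), ν (ball x r) < ⊤) (hq : 1 < q)
    (F : ℕ → (G ⧸ K → ℂ)) (hfin : ∑' n, hardyNorm ν K q (F n) ≠ ⊤) {δ : ℝ} (hδ : 0 < δ) :
    ∃ (c : ℕ → ℂ) (a : ℕ → G → ℂ),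
      (∀ j, IsAtom1q ν q (a j)) ∧ (∀ j, RightInvariant K (a j)) ∧ (Summable fun j => ‖c j‖) ∧
      (∀ᵐ x ∂ν, (Summable fun n => F n (QuotientGroup.mk x)) ∧
        ∑' n, F n (QuotientGroup.mk x) = ∑' j, c j * a j x) ∧
      ENNReal.ofReal (∑' j, ‖c j‖) ≤ (∑' n, hardyNorm ν K q (F n)) + ENNReal.ofReal δ := by
  classical
  have hne : ∀ n, hardyNorm ν K q (F n) ≠ ⊤ := fun n => ne_top_of_le_ne_top hfin (ENNReal.le_tsum n)
  have sel : ∀ n : ℕ, ∃ (c : ℕ → ℂ) (a : ℕ → G → ℂ), (∀ j, IsAtom1q ν q (a j)) ∧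
      (∀ j, RightInvariant K (a j)) ∧ (Summable fun j => ‖c j‖) ∧
      (∀ᵐ x ∂ν, F n (QuotientGroup.mk x) = ∑' j, c j * a j x) ∧
      ENNReal.ofReal (∑' j, ‖c j‖) < hardyNorm ν K q (F n) + ENNReal.ofReal (δ / 2 / 2 ^ n) := by
    intro n
    refine exists_decomp_lt ν ?_
    exact ENNReal.lt_add_right (hne n) (ENNReal.ofReal_pos.mpr (by positivity)).ne'
  choose c a hat hinv hsum hae hlt using sel
  set e : ℕ ≃ ℕ × ℕ := pairEquiv with he
  set T := (∑' n, hardyNorm ν K q (F n)) + ENNReal.ofReal δ with hT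
  have hTne : T ≠ ⊤ := ENNReal.add_ne_top.mpr ⟨hfin, ENNReal.ofReal_ne_top⟩
  have hgeom : Summable (fun n : ℕ => δ / 2 / 2 ^ n) := by
    have hfun : (fun n : ℕ => δ / 2 / 2 ^ n) = fun n : ℕ => (δ / 2) * (1 / 2) ^ n := by
      funext n
      rw [div_pow, one_pow]
      ring
    rw [hfun]
    exact summable_geometric_two.mul_left _
  have hcoefn : ∀ n, ∑' j, (‖c n j‖₊ : ℝ≥0∞) = ENNReal.ofReal (∑' j, ‖c n j‖) := by
    intro n
    rw [ENNReal.ofReal_tsum_of_nonneg (fun j => norm_nonneg _) (hsum n)]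
    exact tsum_congr fun j => (ofReal_norm_eq_coe_nnnorm _).symm
  have htotal : ∑' (p : ℕ × ℕ), (‖c p.1 p.2‖₊ : ℝ≥0∞) ≤ T := by
    calc ∑' (p : ℕ × ℕ), (‖c p.1 p.2‖₊ : ℝ≥0∞)
        = ∑' n, ∑' j, (‖c n j‖₊ : ℝ≥0∞) :=
          ENNReal.tsum_prod (f := fun n j => ((‖c n j‖₊ : ℝ≥0∞)))
      _ = ∑' n, ENNReal.ofReal (∑' j, ‖c n j‖) :=
          tsum_congr hcoefn
      _ ≤ ∑' n, (hardyNorm ν K q (F n) + ENNReal.ofReal (δ / 2 / 2 ^ n)) :=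
          ENNReal.tsum_le_tsum fun n => (hlt n).le
      _ = (∑' n, hardyNorm ν K q (F n)) + ∑' n, ENNReal.ofReal (δ / 2 / 2 ^ n) :=
          ENNReal.tsum_add
      _ = T := by
          rw [hT]
          congr 1
          rw [← ENNReal.ofReal_tsum_of_nonneg (fun n => by positivity) hgeom,
            tsum_geometric_two' δ]
  set W : G → ℝ≥0∞ :=
    fun x => ∑' (p : ℕ × ℕ), ((‖c p.1 p.2‖₊ : ℝ≥0∞) * (‖a p.1 p.2 x‖₊ : ℝ≥0∞)) with hW
  have hWm : AEMeasurable W ν :=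
    AEMeasurable.ennreal_tsum fun p => ((hat p.1 p.2).1.nnnorm.aemeasurable.coe_nnreal_ennreal).const_mul ((‖c p.1 p.2‖₊ : ℝ≥0∞))
  have hWint : ∫⁻ x, W x ∂ν ≤ T := by
    show ∫⁻ x, ∑' (p : ℕ × ℕ), ((‖c p.1 p.2‖₊ : ℝ≥0∞) * (‖a p.1 p.2 x‖₊ : ℝ≥0∞)) ∂ν ≤ T
    rw [lintegral_tsum (f := fun (p : ℕ × ℕ) (x : G) => ((‖c p.1 p.2‖₊ : ℝ≥0∞) * (‖a p.1 p.2 x‖₊ : ℝ≥0∞))) fun p => ((hat p.1 p.2).1.nnnorm.aemeasurable.coe_nnreal_ennreal).const_mul ((‖c p.1 p.2‖₊ : ℝ≥0∞))]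
    refine le_trans (ENNReal.tsum_le_tsum fun p => ?_) htotal
    rw [lintegral_const_mul'' _ ((hat p.1 p.2).1.nnnorm.aemeasurable.coe_nnreal_ennreal)]
    calc (‖c p.1 p.2‖₊ : ℝ≥0∞) * ∫⁻ x, (‖a p.1 p.2 x‖₊ : ℝ≥0∞) ∂ν
        ≤ (‖c p.1 p.2‖₊ : ℝ≥0∞) * 1 :=
          mul_le_mul_right (atom_lintegral_le ν hfin' hq (hat p.1 p.2)) _
      _ = (‖c p.1 p.2‖₊ : ℝ≥0∞) := mul_one _
  have hWlt : ∀ᵐ x ∂ν, W x < ⊤ :=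
    ae_lt_top' hWm (lt_of_le_of_lt hWint (lt_top_iff_ne_top.mpr hTne)).ne
  have haeAll : ∀ᵐ x ∂ν, ∀ n, F n (QuotientGroup.mk x) = ∑' j, c n j * a n j x :=
    ae_all_iff.mpr hae
  have hCsum2 : Summable (fun p : ℕ × ℕ => ‖c p.1 p.2‖) := by
    rw [summable_prod_of_nonneg (fun p => norm_nonneg _)]
    refine ⟨fun n => hsum n, ?_⟩
    have hb : ∀ n, ∑' j, ‖c n j‖ ≤ (hardyNorm ν K q (F n)).toReal + δ / 2 / 2 ^ n := by
      intro n
      have h1 := (hlt n).le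
      rw [← ENNReal.ofReal_toReal (hne n),
        ← ENNReal.ofReal_add ENNReal.toReal_nonneg (by positivity)] at h1
      exact (ENNReal.ofReal_le_ofReal_iff (by positivity)).mp h1
    exact Summable.of_nonneg_of_le (fun n => tsum_nonneg fun j => norm_nonneg _) hb
      ((ENNReal.summable_toReal hfin).add hgeom)
  have hCsum : Summable fun i => ‖c (e i).1 (e i).2‖ :=
    (Equiv.summable_iff e (f := fun p : ℕ × ℕ => ‖c p.1 p.2‖)).mpr hCsum2
  refine ⟨fun i => c (e i).1 (e i).2, fun i => a (e i).1 (e i).2,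
    fun i => hat _ _, fun i => hinv _ _, hCsum, ?_, ?_⟩
  · filter_upwards [hWlt, haeAll] with x hWx hFx
    have husum : Summable (fun p : ℕ × ℕ => c p.1 p.2 * a p.1 p.2 x) := by
      apply Summable.of_nnnorm
      rw [← ENNReal.tsum_coe_ne_top_iff_summable]
      have hcongr : ∀ p : ℕ × ℕ,
          ((‖c p.1 p.2 * a p.1 p.2 x‖₊ : ℝ≥0) : ℝ≥0∞) =
            (‖c p.1 p.2‖₊ : ℝ≥0∞) * (‖a p.1 p.2 x‖₊ : ℝ≥0∞) := fun p => by
        rw [nnnorm_mul, ENNReal.coe_mul]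
      rw [tsum_congr hcongr]
      exact hWx.ne
    have hrow : ∀ n, HasSum (fun j => c n j * a n j x) (F n (QuotientGroup.mk x)) := by
      intro n
      have h1 := husum.prod_factor n
      rw [hFx n]
      exact h1.hasSum
    have hprod : HasSum (fun n => F n (QuotientGroup.mk x))
        (∑' p : ℕ × ℕ, c p.1 p.2 * a p.1 p.2 x) :=
      HasSum.prod_fiberwise (f := fun p : ℕ × ℕ => c p.1 p.2 * a p.1 p.2 x)
        (g := fun n => F n (QuotientGroup.mk x)) husum.hasSum hrow
    refine ⟨hprod.summable, ?_⟩
    rw [hprod.tsum_eq]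
    exact (e.tsum_eq (fun p : ℕ × ℕ => c p.1 p.2 * a p.1 p.2 x)).symm
  · rw [ENNReal.ofReal_tsum_of_nonneg (fun i => norm_nonneg _) hCsum]
    calc ∑' i, ENNReal.ofReal ‖c (e i).1 (e i).2‖
        = ∑' i, ((‖c (e i).1 (e i).2‖₊ : ℝ≥0∞)) :=
          tsum_congr fun i => ofReal_norm_eq_coe_nnnorm _
      _ = ∑' p : ℕ × ℕ, (‖c p.1 p.2‖₊ : ℝ≥0∞) :=
          e.tsum_eq (fun p : ℕ × ℕ => (‖c p.1 p.2‖₊ : ℝ≥0∞))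
      _ ≤ T := htotal

end Aux2

section Aux3

variable {G : Type*} [Group G] [MetricSpace G] [IsTopologicalGroup G]
  [MeasurableSpace G] [BorelSpace G] [LocallyCompactSpace G]
variable (ν : Measure G) [ν.IsHaarMeasure]

/-- Every right-`K`-saturated `ν`-null set is contained in a measurable
right-`K`-saturated `ν`-null set. -/
lemma sat_hull [SecondCountableTopology G] [SigmaFinite ν]
    (K : Subgroup G) (hK : IsCompact (K : Set G)) (T : Set G) (hT0 : ν T = 0)
    (hTsat : ∀ x ∈ T, ∀ k ∈ K, x * k ∈ T) :
    ∃ N : Set G, MeasurableSet N ∧ ν N = 0 ∧ T ⊆ N ∧ ∀ x ∈ N, ∀ k ∈ K, x * k ∈ N := by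
  classical
  haveI : CompactSpace K := isCompact_iff_compactSpace.mp hK
  haveI : BorelSpace K := Subtype.borelSpace (K : Set G)
  haveI hne : Nonempty K := ⟨1⟩
  let K₀ : TopologicalSpace.PositiveCompacts K := ⟨⟨Set.univ, isCompact_univ⟩, by simp⟩
  let μ0 : Measure K := Measure.haarMeasure K₀
  haveI hμ0prob : IsProbabilityMeasure μ0 :=
    ⟨by have := Measure.haarMeasure_self (K₀ := K₀); exact this⟩
  haveI : μ0.IsMulLeftInvariant := inferInstance
  set μK : Measure G := μ0.map (Subtype.val) with hμK
  haveI : IsProbabilityMeasure μK :=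
    Measure.isProbabilityMeasure_map (measurable_subtype_coe.aemeasurable)
  -- left invariance under elements of K
  have hμKinv : ∀ k₀ ∈ K, ∀ h : G → ℝ≥0∞, Measurable h →
      ∫⁻ y, h (k₀ * y) ∂μK = ∫⁻ y, h y ∂μK := by
    intro k₀ hk₀ h hh
    rw [hμK, lintegral_map (f := fun y => h (k₀ * y)) (g := Subtype.val)
        (by exact hh.comp (measurable_const_mul k₀)) measurable_subtype_coe,
      lintegral_map hh measurable_subtype_coe]
    have h1 := lintegral_mul_left_eq_self (μ := μ0) (fun k : K => h ↑k) ⟨k₀, hk₀⟩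
    simpa [Subgroup.coe_mul] using h1
  -- the section trick
  have sect : ∀ A : Set G, MeasurableSet A → ν A = 0 →
      ∀ᵐ x ∂ν, μK {y | x * y ∈ A} = 0 := by
    intro A hA h0
    have hs : MeasurableSet ((fun p : G × G => p.1 * p.2) ⁻¹' A) := measurable_mul hA
    have hprod : (ν.prod μK) ((fun p : G × G => p.1 * p.2) ⁻¹' A) = 0 := by
      rw [Measure.prod_apply_symm hs]
      have hz : ∀ y : G, ν ((fun x => (x, y)) ⁻¹' ((fun p : G × G => p.1 * p.2) ⁻¹' A)) = 0 :=
        fun y => (measure_mul_right_null ν y).mpr h0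
      simp only [hz, lintegral_zero]
    have := (Measure.measure_prod_null hs).mp hprod
    filter_upwards [this] with x hx
    exact hx
  -- averaging constructions
  set N₀ := toMeasurable ν T with hN₀def
  have hN₀m : MeasurableSet N₀ := measurableSet_toMeasurable ν T
  have hN₀0 : ν N₀ = 0 := by rw [hN₀def, measure_toMeasurable]; exact hT0
  have hTN₀ : T ⊆ N₀ := subset_toMeasurable ν T
  set u : G → ℝ≥0∞ := fun x => ∫⁻ y, N₀.indicator (fun _ => (1 : ℝ≥0∞)) (x * y) ∂μK with hu
  have hum : Measurable u := by
    apply Measurable.lintegral_prod_right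
      (f := fun x y => N₀.indicator (fun _ => (1 : ℝ≥0∞)) (x * y))
    exact (measurable_const.indicator hN₀m).comp measurable_mul
  have hu0 : ∀ᵐ x ∂ν, u x = 0 := by
    filter_upwards [sect N₀ hN₀m hN₀0] with x hx
    show ∫⁻ y, N₀.indicator (fun _ => (1 : ℝ≥0∞)) (x * y) ∂μK = 0
    have hcongr : ∀ y : G, N₀.indicator (fun _ => (1 : ℝ≥0∞)) (x * y) =
        ((fun y => x * y) ⁻¹' N₀).indicator (fun _ => (1 : ℝ≥0∞)) y := by
      intro y
      simp [Set.indicator_apply, Set.mem_preimage]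
    simp only [hcongr]
    rw [lintegral_indicator ((measurable_const_mul x) hN₀m), setLIntegral_one]
    exact hx
  have hu1 : ∀ v : G, (∀ k ∈ K, v * k ∈ N₀) → u v = 1 := by
    intro v hv
    show ∫⁻ y, N₀.indicator (fun _ => (1 : ℝ≥0∞)) (v * y) ∂μK = 1
    rw [hμK, lintegral_map (f := fun y => N₀.indicator (fun _ => (1 : ℝ≥0∞)) (v * y))
        (g := Subtype.val)
        (by exact (measurable_const.indicator hN₀m).comp (measurable_const_mul v))
        measurable_subtype_coe]
    have hcongr : ∀ k : K, N₀.indicator (fun _ => (1 : ℝ≥0∞)) (v * ↑k) = 1 := by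
      intro k
      rw [Set.indicator_of_mem (hv ↑k k.2)]
    simp only [hcongr]
    simp
  set w : G → ℝ≥0∞ := fun x => ∫⁻ y, u (x * y) ∂μK with hw
  have hwm : Measurable w := by
    apply Measurable.lintegral_prod_right (f := fun x y => u (x * y))
    exact hum.comp measurable_mul
  have hw0 : ∀ᵐ x ∂ν, w x = 0 := by
    have hU : MeasurableSet {z : G | u z ≠ 0} := (hum (measurableSet_singleton 0)).compl
    have hU0 : ν {z : G | u z ≠ 0} = 0 := ae_iff.mp hu0
    filter_upwards [sect _ hU hU0] with x hx
    show ∫⁻ y, u (x * y) ∂μK = 0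
    have : ∀ᵐ y ∂μK, u (x * y) = 0 := by
      rw [ae_iff]
      exact hx
    rw [lintegral_congr_ae this]
    simp
  refine ⟨{x : G | w x ≠ 0}, (hwm (measurableSet_singleton 0)).compl, ?_, ?_, ?_⟩
  · exact ae_iff.mp hw0
  · intro x hx
    have hwx : w x = 1 := by
      show ∫⁻ y, u (x * y) ∂μK = 1
      rw [hμK, lintegral_map (f := fun y => u (x * y)) (g := Subtype.val)
        (by exact hum.comp (measurable_const_mul x)) measurable_subtype_coe]
      have hcongr : ∀ k : K, u (x * ↑k) = 1 := by
        intro k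
        refine hu1 (x * ↑k) fun k' hk' => ?_
        rw [mul_assoc]
        exact hTN₀ (hTsat x hx _ (mul_mem k.2 hk'))
      simp only [hcongr]
      simp
    simp [Set.mem_setOf_eq, hwx]
  · intro x hx k hk
    have hwk : w (x * k) = w x := by
      have h1 := hμKinv k hk (fun y => u (x * y)) (hum.comp (measurable_const_mul x))
      show ∫⁻ y, u (x * k * y) ∂μK = ∫⁻ y, u (x * y) ∂μK
      calc ∫⁻ y, u (x * k * y) ∂μK = ∫⁻ y, u (x * (k * y)) ∂μK := by
            simp only [mul_assoc]
        _ = ∫⁻ y, u (x * y) ∂μK := h1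
    simpa [Set.mem_setOf_eq, hwk] using hx

end Aux3

section Aux4

variable {G : Type*} [Group G] [MetricSpace G] [IsTopologicalGroup G]
  [MeasurableSpace G] [BorelSpace G] [LocallyCompactSpace G]
variable (ν : Measure G) [ν.IsHaarMeasure] {K : Subgroup G} {q : ℝ≥0∞}

/-- Definiteness: vanishing Hardy norm forces a.e. vanishing. -/
lemma hardyNorm_definite [SecondCountableTopology G] [SigmaFinite ν]
    (hfin' : ∀ (x : G) (r : ℝ), ν (ball x r) < ⊤) (hq : 1 < q)
    (hK : IsCompact (K : Set G)) (f : G ⧸ K → ℂ) (hf : hardyNorm ν K q f = 0) :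
    f =ᵐ[ν.map (QuotientGroup.mk : G → G ⧸ K)] 0 := by
  classical
  -- Step 1: the saturated set where `f ∘ mk` does not vanish is null.
  have hSm : ∀ m : ℕ, ν {x : G | ((m : ℝ≥0∞) + 1)⁻¹ ≤ (‖f (QuotientGroup.mk x)‖₊ : ℝ≥0∞)} = 0 := by
    intro m
    set εm : ℝ≥0∞ := ((m : ℝ≥0∞) + 1)⁻¹ with hεm
    have hεm0 : εm ≠ 0 := by
      rw [hεm]
      exact ENNReal.inv_ne_zero.mpr (by simp)
    have hεmt : εm ≠ ⊤ := by
      rw [hεm]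
      exact ENNReal.inv_ne_top.mpr (by simp)
    refine le_antisymm ?_ (zero_le)
    refine ENNReal.le_of_forall_pos_le_add fun δ hδ _ => ?_
    rw [zero_add]
    have htpos : (0 : ℝ≥0∞) < εm * δ := by
      refine ENNReal.mul_pos hεm0 ?_
      exact_mod_cast hδ.ne'
    obtain ⟨c, a, h1, h2, h3, h4, h5⟩ := exists_decomp_lt ν (f := f) (t := εm * δ)
      (by rw [hf]; exact htpos)
    set W : G → ℝ≥0∞ := fun x => ∑' j, ((‖c j‖₊ : ℝ≥0∞) * (‖a j x‖₊ : ℝ≥0∞)) with hW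
    have hWm : AEMeasurable W ν :=
      AEMeasurable.ennreal_tsum fun j => ((h1 j).1.nnnorm.aemeasurable.coe_nnreal_ennreal).const_mul _
    have hWint : ∫⁻ x, W x ∂ν ≤ εm * δ := by
      show ∫⁻ x, ∑' j, ((‖c j‖₊ : ℝ≥0∞) * (‖a j x‖₊ : ℝ≥0∞)) ∂ν ≤ εm * δ
      rw [lintegral_tsum fun j => ((h1 j).1.nnnorm.aemeasurable.coe_nnreal_ennreal).const_mul _]
      refine le_trans (ENNReal.tsum_le_tsum (g := fun j => (‖c j‖₊ : ℝ≥0∞) * 1)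
        fun j => ?_) ?_
      · rw [lintegral_const_mul'' _ ((h1 j).1.nnnorm.aemeasurable.coe_nnreal_ennreal)]
        exact mul_le_mul_right (atom_lintegral_le ν hfin' hq (h1 j)) _
      · calc ∑' j, (‖c j‖₊ : ℝ≥0∞) * 1 = ∑' j, (‖c j‖₊ : ℝ≥0∞) := by simp
          _ = ENNReal.ofReal (∑' j, ‖c j‖) := by
              rw [ENNReal.ofReal_tsum_of_nonneg (fun j => norm_nonneg _) h3]
              exact tsum_congr fun j => (ofReal_norm_eq_coe_nnnorm _).symm
          _ ≤ εm * δ := h5.le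
    have hub : ∀ᵐ x ∂ν, (‖f (QuotientGroup.mk x)‖₊ : ℝ≥0∞) ≤ W x := by
      filter_upwards [h4] with x hx
      by_cases hWx : W x = ⊤
      · rw [hWx]; exact le_top
      have hsumm : Summable fun j => ‖c j * a j x‖ := by
        rw [show (fun j => ‖c j * a j x‖) = fun j => ((‖c j * a j x‖₊ : ℝ≥0) : ℝ) from rfl]
        rw [NNReal.summable_coe]
        rw [← ENNReal.tsum_coe_ne_top_iff_summable]
        have hcongr : ∀ j, ((‖c j * a j x‖₊ : ℝ≥0) : ℝ≥0∞) =
            (‖c j‖₊ : ℝ≥0∞) * (‖a j x‖₊ : ℝ≥0∞) := fun j => by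
          rw [nnnorm_mul, ENNReal.coe_mul]
        rw [tsum_congr hcongr]
        exact hWx
      rw [hx]
      calc (‖∑' j, c j * a j x‖₊ : ℝ≥0∞) = ENNReal.ofReal ‖∑' j, c j * a j x‖ :=
            (ofReal_norm_eq_coe_nnnorm _).symm
        _ ≤ ENNReal.ofReal (∑' j, ‖c j * a j x‖) :=
            ENNReal.ofReal_le_ofReal (norm_tsum_le_tsum_norm hsumm)
        _ = ∑' j, ENNReal.ofReal ‖c j * a j x‖ :=
            ENNReal.ofReal_tsum_of_nonneg (fun j => norm_nonneg _) hsumm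
        _ = W x := by
            refine tsum_congr fun j => ?_
            rw [ofReal_norm_eq_coe_nnnorm, nnnorm_mul, ENNReal.coe_mul]
    have hbad : ν {x : G | ¬ (‖f (QuotientGroup.mk x)‖₊ : ℝ≥0∞) ≤ W x} = 0 := ae_iff.mp hub
    have hsub : {x : G | εm ≤ (‖f (QuotientGroup.mk x)‖₊ : ℝ≥0∞)} ⊆
        {x : G | εm ≤ W x} ∪ {x : G | ¬ (‖f (QuotientGroup.mk x)‖₊ : ℝ≥0∞) ≤ W x} := by
      intro x hx
      by_cases h : (‖f (QuotientGroup.mk x)‖₊ : ℝ≥0∞) ≤ W x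
      · exact Or.inl (le_trans hx h)
      · exact Or.inr h
    calc ν {x : G | εm ≤ (‖f (QuotientGroup.mk x)‖₊ : ℝ≥0∞)}
        ≤ ν ({x : G | εm ≤ W x} ∪ {x : G | ¬ (‖f (QuotientGroup.mk x)‖₊ : ℝ≥0∞) ≤ W x}) :=
          measure_mono hsub
      _ ≤ ν {x : G | εm ≤ W x} + ν {x : G | ¬ (‖f (QuotientGroup.mk x)‖₊ : ℝ≥0∞) ≤ W x} :=
          measure_union_le _ _
      _ = ν {x : G | εm ≤ W x} := by rw [hbad, add_zero]
      _ ≤ (∫⁻ x, W x ∂ν) / εm := meas_ge_le_lintegral_div hWm hεm0 hεmt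
      _ ≤ (εm * δ) / εm := ENNReal.div_le_div_right hWint εm
      _ = δ := by
          rw [div_eq_mul_inv, mul_comm εm δ, mul_assoc, ENNReal.mul_inv_cancel hεm0 hεmt,
            mul_one]
  have hS0 : ν {x : G | f (QuotientGroup.mk x) ≠ 0} = 0 := by
    have hsub : {x : G | f (QuotientGroup.mk x) ≠ 0} ⊆
        ⋃ m : ℕ, {x : G | ((m : ℝ≥0∞) + 1)⁻¹ ≤ (‖f (QuotientGroup.mk x)‖₊ : ℝ≥0∞)} := by
      intro x hx
      have hne : (‖f (QuotientGroup.mk x)‖₊ : ℝ≥0∞) ≠ 0 := by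
        simpa using hx
      obtain ⟨n, hn⟩ := ENNReal.exists_inv_nat_lt hne
      refine Set.mem_iUnion.mpr ⟨n, ?_⟩
      refine le_trans ?_ hn.le
      exact ENNReal.inv_le_inv.mpr (by simp)
    exact measure_mono_null hsub (measure_iUnion_null hSm)
  -- Step 2: saturated measurable hull.
  have hsat : ∀ x ∈ {x : G | f (QuotientGroup.mk x) ≠ 0}, ∀ k ∈ K,
      x * k ∈ {x : G | f (QuotientGroup.mk x) ≠ 0} := by
    intro x hx k hk
    simpa [Set.mem_setOf_eq, QuotientGroup.mk_mul_of_mem x hk] using hx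
  obtain ⟨N, hNm, hN0, hSN, hNsat⟩ := sat_hull ν K hK _ hS0 hsat
  have hpre : (QuotientGroup.mk : G → G ⧸ K) ⁻¹' (QuotientGroup.mk '' N) = N := by
    ext x
    constructor
    · rintro ⟨w, hw, hwx⟩
      have hmem : w⁻¹ * x ∈ K := QuotientGroup.eq.mp hwx
      have : w * (w⁻¹ * x) ∈ N := hNsat w hw _ hmem
      simpa using this
    · intro hx
      exact ⟨x, hx, rfl⟩
  have htm : MeasurableSet (QuotientGroup.mk '' N : Set (G ⧸ K)) := by
    apply measurableSet_quotient.mpr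
    show MeasurableSet ((QuotientGroup.mk : G → G ⧸ K) ⁻¹' (QuotientGroup.mk '' N))
    rw [hpre]
    exact hNm
  have hmain : (ν.map (QuotientGroup.mk : G → G ⧸ K)) (QuotientGroup.mk '' N) = 0 := by
    rw [Measure.map_apply (f := (QuotientGroup.mk : G → G ⧸ K))
      (by exact measurable_quotient_mk'') htm]
    show ν ((QuotientGroup.mk : G → G ⧸ K) ⁻¹' (QuotientGroup.mk '' N)) = 0
    rw [hpre]
    exact hN0
  have hsub2 : {y : G ⧸ K | f y ≠ 0} ⊆ QuotientGroup.mk '' N := by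
    intro y hy
    obtain ⟨x, rfl⟩ := QuotientGroup.mk_surjective y
    exact ⟨x, hSN hy, rfl⟩
  show ∀ᵐ y ∂(ν.map (QuotientGroup.mk : G → G ⧸ K)), f y = 0
  rw [ae_iff]
  exact measure_mono_null hsub2 hmain

end Aux4

/-- **Proposition 1.** If `G ≠ K` then `H^{1,q}(G/K)` is nontrivial and Banach. -/
theorem hardy_nontrivial_and_banach
    (ν : Measure G) [ν.IsHaarMeasure]
    (hleft : ∀ g x y : G, dist (g * x) (g * y) = dist x y)
    -- the doubling condition
    (C : ℝ) (hC : ∀ (x : G) (r : ℝ), 0 < r →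
      ν (ball x (2 * r)) ≤ ENNReal.ofReal C * ν (ball x r))
    (K : Subgroup G) (hK : IsCompact (K : Set G))
    -- `G ≠ K`
    (hGK : ∃ x : G, x ∉ K)
    (q : ℝ≥0∞) (hq : 1 < q) :
    -- nontriviality
    (∃ f : G ⧸ K → ℂ, hardyNorm ν K q f ≠ ⊤ ∧
        ¬ (f =ᵐ[ν.map (QuotientGroup.mk : G → G ⧸ K)] 0)) ∧
    -- subadditivity of the norm
    (∀ f g : G ⧸ K → ℂ,
        hardyNorm ν K q (f + g) ≤ hardyNorm ν K q f + hardyNorm ν K q g) ∧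
    -- absolute homogeneity of the norm
    (∀ (c : ℂ) (f : G ⧸ K → ℂ),
        hardyNorm ν K q (c • f) = ENNReal.ofReal ‖c‖ * hardyNorm ν K q f) ∧
    -- definiteness (modulo `λ`-a.e. equality)
    (∀ f : G ⧸ K → ℂ, hardyNorm ν K q f = 0 →
        f =ᵐ[ν.map (QuotientGroup.mk : G → G ⧸ K)] 0) ∧
    -- completeness: every absolutely convergent series in `H^{1,q}(G/K)` converges
    (∀ f : ℕ → (G ⧸ K → ℂ), (∀ n, hardyNorm ν K q (f n) ≠ ⊤) →
        (∑' n, hardyNorm ν K q (f n)) ≠ ⊤ →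
        ∃ g : G ⧸ K → ℂ, hardyNorm ν K q g ≠ ⊤ ∧
          Tendsto (fun N => hardyNorm ν K q
              (fun y => g y - ∑ n ∈ Finset.range N, f n y)) atTop (𝓝 0)) := by
  classical
  haveI hSC : SecondCountableTopology G := secondCountable_of_doubling ν hleft C hC
  haveI : SigmaFinite ν := inferInstance
  have hball : ∀ (x : G) (r : ℝ), ν (ball x r) < ⊤ := ball_lt_top ν hleft C hC
  -- ### Subadditivity
  have hsub : ∀ f g : G ⧸ K → ℂ,
      hardyNorm ν K q (f + g) ≤ hardyNorm ν K q f + hardyNorm ν K q g := by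
    intro f g
    by_cases hf : hardyNorm ν K q f = ⊤
    · rw [hf, top_add]; exact le_top
    by_cases hg : hardyNorm ν K q g = ⊤
    · rw [hg, add_top]; exact le_top
    refine ENNReal.le_of_forall_pos_le_add fun ε hε _ => ?_
    set F : ℕ → (G ⧸ K → ℂ) := fun n => if n = 0 then f else if n = 1 then g else 0 with hF
    have hFzero : ∀ n ∉ ({0, 1} : Finset ℕ), hardyNorm ν K q (F n) = 0 := by
      intro n hn
      simp only [Finset.mem_insert, Finset.mem_singleton] at hn
      push_neg at hn
      have hFn : F n = 0 := by simp [hF, hn.1, hn.2]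
      rw [hFn]
      exact hardyNorm_eq_zero_of_ae ν (Filter.Eventually.of_forall fun x => rfl)
    have hFsum : ∑' n, hardyNorm ν K q (F n) = hardyNorm ν K q f + hardyNorm ν K q g := by
      rw [tsum_eq_sum hFzero, Finset.sum_pair (by norm_num : (0 : ℕ) ≠ 1)]
      simp [hF]
    obtain ⟨c, a, h1, h2, h3, h4, h5⟩ := master ν hball hq F
      (by rw [hFsum]; exact ENNReal.add_ne_top.mpr ⟨hf, hg⟩)
      (δ := (ε : ℝ)) (by exact_mod_cast hε)
    have hae' : ∀ᵐ x ∂ν, (f + g) (QuotientGroup.mk x) = ∑' j, c j * a j x := by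
      filter_upwards [h4] with x hx
      obtain ⟨hsumm, heq⟩ := hx
      have hptz : ∀ n ∉ ({0, 1} : Finset ℕ), F n (QuotientGroup.mk x) = 0 := by
        intro n hn
        simp only [Finset.mem_insert, Finset.mem_singleton] at hn
        push_neg at hn
        simp [hF, hn.1, hn.2]
      have hpt : ∑' n, F n (QuotientGroup.mk x) =
          f (QuotientGroup.mk x) + g (QuotientGroup.mk x) := by
        rw [tsum_eq_sum hptz, Finset.sum_pair (by norm_num : (0 : ℕ) ≠ 1)]
        simp [hF]
      rw [Pi.add_apply, ← hpt, heq]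
    calc hardyNorm ν K q (f + g) ≤ ENNReal.ofReal (∑' j, ‖c j‖) :=
          hardyNorm_le_decomp ν h1 h2 h3 hae'
      _ ≤ (∑' n, hardyNorm ν K q (F n)) + ENNReal.ofReal (ε : ℝ) := h5
      _ = hardyNorm ν K q f + hardyNorm ν K q g + ε := by
          rw [hFsum, ENNReal.ofReal_coe_nnreal]
  -- ### Homogeneity
  have hsmul_le : ∀ (s : ℂ) (f : G ⧸ K → ℂ),
      hardyNorm ν K q (s • f) ≤ ENNReal.ofReal ‖s‖ * hardyNorm ν K q f := by
    intro s f
    by_cases hs : s = 0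
    · subst hs
      rw [zero_smul]
      rw [hardyNorm_eq_zero_of_ae ν (f := (0 : G ⧸ K → ℂ))
        (Filter.Eventually.of_forall fun x => rfl)]
      exact zero_le
    by_cases hf : hardyNorm ν K q f = ⊤
    · rw [hf, ENNReal.mul_top (ENNReal.ofReal_pos.mpr (norm_pos_iff.mpr hs)).ne']
      exact le_top
    refine ENNReal.le_of_forall_pos_le_add fun ε hε _ => ?_
    set δ : ℝ := (ε : ℝ) / ‖s‖ with hδdef
    have hδpos : 0 < δ := div_pos hε (norm_pos_iff.mpr hs)
    obtain ⟨c, a, h1, h2, h3, h4, h5⟩ := exists_decomp_lt ν (f := f)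
      (ENNReal.lt_add_right hf (ENNReal.ofReal_pos.mpr hδpos).ne')
    have hae' : ∀ᵐ x ∂ν, (s • f) (QuotientGroup.mk x) = ∑' j, (s * c j) * a j x := by
      filter_upwards [h4] with x hx
      calc (s • f) (QuotientGroup.mk x) = s * ∑' j, c j * a j x := by
            rw [Pi.smul_apply, smul_eq_mul, hx]
        _ = ∑' j, s * (c j * a j x) := (_root_.tsum_mul_left).symm
        _ = ∑' j, (s * c j) * a j x := tsum_congr fun j => (mul_assoc _ _ _).symm
    have hs3 : Summable fun j => ‖s * c j‖ := by
      simpa [norm_mul] using h3.mul_left ‖s‖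
    calc hardyNorm ν K q (s • f) ≤ ENNReal.ofReal (∑' j, ‖s * c j‖) :=
          hardyNorm_le_decomp ν h1 h2 hs3 hae'
      _ = ENNReal.ofReal (‖s‖ * ∑' j, ‖c j‖) := by
          congr 1
          calc ∑' j, ‖s * c j‖ = ∑' j, ‖s‖ * ‖c j‖ := tsum_congr fun j => norm_mul s (c j)
            _ = ‖s‖ * ∑' j, ‖c j‖ := _root_.tsum_mul_left
      _ = ENNReal.ofReal ‖s‖ * ENNReal.ofReal (∑' j, ‖c j‖) :=
          ENNReal.ofReal_mul (norm_nonneg s)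
      _ ≤ ENNReal.ofReal ‖s‖ * (hardyNorm ν K q f + ENNReal.ofReal δ) :=
          mul_le_mul_right h5.le _
      _ = ENNReal.ofReal ‖s‖ * hardyNorm ν K q f + ENNReal.ofReal ‖s‖ * ENNReal.ofReal δ :=
          mul_add _ _ _
      _ = ENNReal.ofReal ‖s‖ * hardyNorm ν K q f + ε := by
          congr 1
          rw [← ENNReal.ofReal_mul (norm_nonneg s), hδdef,
            mul_div_cancel₀ (ε : ℝ) (norm_ne_zero_iff.mpr hs), ENNReal.ofReal_coe_nnreal]
  have hsmul : ∀ (s : ℂ) (f : G ⧸ K → ℂ),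
      hardyNorm ν K q (s • f) = ENNReal.ofReal ‖s‖ * hardyNorm ν K q f := by
    intro s f
    rcases eq_or_ne s 0 with rfl | hs
    · rw [zero_smul, hardyNorm_eq_zero_of_ae ν (f := (0 : G ⧸ K → ℂ))
        (Filter.Eventually.of_forall fun x => rfl)]
      simp
    refine le_antisymm (hsmul_le s f) ?_
    have h2 := hsmul_le s⁻¹ (s • f)
    rw [smul_smul, inv_mul_cancel₀ hs, one_smul] at h2
    calc ENNReal.ofReal ‖s‖ * hardyNorm ν K q f
        ≤ ENNReal.ofReal ‖s‖ * (ENNReal.ofReal ‖s⁻¹‖ * hardyNorm ν K q (s • f)) :=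
          mul_le_mul_right h2 _
      _ = (ENNReal.ofReal ‖s‖ * ENNReal.ofReal ‖s⁻¹‖) * hardyNorm ν K q (s • f) :=
          (mul_assoc _ _ _).symm
      _ = hardyNorm ν K q (s • f) := by
          rw [← ENNReal.ofReal_mul (norm_nonneg _), norm_inv,
            mul_inv_cancel₀ (norm_ne_zero_iff.mpr hs), ENNReal.ofReal_one, one_mul]
  -- ### Completeness
  have hcomplete : ∀ f : ℕ → (G ⧸ K → ℂ), (∀ n, hardyNorm ν K q (f n) ≠ ⊤) →
      (∑' n, hardyNorm ν K q (f n)) ≠ ⊤ →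
      ∃ g : G ⧸ K → ℂ, hardyNorm ν K q g ≠ ⊤ ∧
        Tendsto (fun N => hardyNorm ν K q
            (fun y => g y - ∑ n ∈ Finset.range N, f n y)) atTop (𝓝 0) := by
    intro f hne hfin
    set g : G ⧸ K → ℂ := fun y => ∑' n, f n y with hg
    obtain ⟨c, a, h1, h2, h3, h4, h5⟩ := master ν hball hq f hfin (δ := 1) one_pos
    have hgnorm : hardyNorm ν K q g ≠ ⊤ := by
      have hle : hardyNorm ν K q g ≤ (∑' n, hardyNorm ν K q (f n)) + ENNReal.ofReal 1 := by
        refine le_trans (hardyNorm_le_decomp ν (f := g) h1 h2 h3 ?_) h5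
        filter_upwards [h4] with x hx
        exact hx.2
      exact ne_top_of_le_ne_top (ENNReal.add_ne_top.mpr ⟨hfin, ENNReal.ofReal_ne_top⟩) hle
    refine ⟨g, hgnorm, ?_⟩
    have htailfin : ∀ N : ℕ, (∑' n, hardyNorm ν K q (f (n + N))) ≠ ⊤ := by
      intro N
      refine ne_top_of_le_ne_top hfin ?_
      exact ENNReal.tsum_comp_le_tsum_of_injective (add_left_injective N) _
    have htail : ∀ N : ℕ, hardyNorm ν K q (fun y => g y - ∑ n ∈ Finset.range N, f n y) ≤
        ∑' n, hardyNorm ν K q (f (n + N)) := by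
      intro N
      refine ENNReal.le_of_forall_pos_le_add fun ε hε _ => ?_
      obtain ⟨c', a', k1, k2, k3, k4, k5⟩ := master ν hball hq (fun n => f (n + N))
        (htailfin N) (δ := (ε : ℝ)) (by exact_mod_cast hε)
      have hae' : ∀ᵐ x ∂ν, (fun y => g y - ∑ n ∈ Finset.range N, f n y) (QuotientGroup.mk x)
          = ∑' j, c' j * a' j x := by
        filter_upwards [h4, k4] with x hx1 hx2
        obtain ⟨hsum1, -⟩ := hx1
        obtain ⟨-, heq2⟩ := hx2
        have hdec := Summable.sum_add_tsum_nat_add (f := fun n => f n (QuotientGroup.mk x)) N hsum1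
        have hgx : g (QuotientGroup.mk x) = ∑' n, f n (QuotientGroup.mk x) := rfl
        have : g (QuotientGroup.mk x) - ∑ n ∈ Finset.range N, f n (QuotientGroup.mk x)
            = ∑' n, f (n + N) (QuotientGroup.mk x) := by
          rw [hgx, ← hdec]
          ring
        rw [this, heq2]
      calc hardyNorm ν K q (fun y => g y - ∑ n ∈ Finset.range N, f n y)
          ≤ ENNReal.ofReal (∑' j, ‖c' j‖) := hardyNorm_le_decomp ν k1 k2 k3 hae'
        _ ≤ (∑' n, hardyNorm ν K q (f (n + N))) + ENNReal.ofReal (ε : ℝ) := k5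
        _ = (∑' n, hardyNorm ν K q (f (n + N))) + ε := by rw [ENNReal.ofReal_coe_nnreal]
    have h0 : Tendsto (fun N => ∑' n, hardyNorm ν K q (f (n + N))) atTop (𝓝 0) :=
      ENNReal.tendsto_sum_nat_add (fun n => hardyNorm ν K q (f n)) hfin
    exact tendsto_of_tendsto_of_tendsto_of_le_of_le tendsto_const_nhds h0
      (fun N => zero_le) htail
  -- ### Nontriviality
  have hnontriv : ∃ f : G ⧸ K → ℂ, hardyNorm ν K q f ≠ ⊤ ∧
      ¬ (f =ᵐ[ν.map (QuotientGroup.mk : G → G ⧸ K)] 0) := by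
    obtain ⟨z, hz⟩ := hGK
    have hKc : IsClosed (K : Set G) := hK.isClosed
    have hsepz : ∃ ε > 0, ∀ u ∈ ball (1 : G) ε, ∀ k ∈ K, ∀ u' ∈ ball (1 : G) ε,
        u * k * u'⁻¹ ≠ z := by
      by_contra hcon
      push_neg at hcon
      have hseq : ∀ n : ℕ, ∃ p : G × G × G, dist p.1 1 < 1 / (n + 1) ∧ p.2.1 ∈ K ∧
          dist p.2.2 1 < 1 / (n + 1) ∧ p.1 * p.2.1 * p.2.2⁻¹ = z := by
        intro n
        obtain ⟨u, hu, k, hk, u', hu', he⟩ := hcon (1 / (n + 1)) (by positivity)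
        exact ⟨⟨u, k, u'⟩, mem_ball.mp hu, hk, mem_ball.mp hu', he⟩
      choose p hp1 hp2 hp3 hp4 using hseq
      set u : ℕ → G := fun n => (p n).1 with hu
      set k : ℕ → G := fun n => (p n).2.1 with hk'
      set u' : ℕ → G := fun n => (p n).2.2 with hu'
      have hu1 : Tendsto u atTop (𝓝 1) := by
        rw [tendsto_iff_dist_tendsto_zero]
        exact squeeze_zero (fun n => dist_nonneg) (fun n => (hp1 n).le)
          tendsto_one_div_add_atTop_nhds_zero_nat
      have hu'1 : Tendsto u' atTop (𝓝 1) := by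
        rw [tendsto_iff_dist_tendsto_zero]
        exact squeeze_zero (fun n => dist_nonneg) (fun n => (hp3 n).le)
          tendsto_one_div_add_atTop_nhds_zero_nat
      have hkz : Tendsto k atTop (𝓝 z) := by
        have hkeq : ∀ n, k n = (u n)⁻¹ * z * (u' n) := by
          intro n
          have h := hp4 n
          show (p n).2.1 = ((p n).1)⁻¹ * z * (p n).2.2
          rw [← h]
          group
        have hlim : Tendsto (fun n => (u n)⁻¹ * z * (u' n)) atTop (𝓝 ((1 : G)⁻¹ * z * 1)) :=
          ((hu1.inv.mul tendsto_const_nhds).mul hu'1)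
        have hlim' : Tendsto (fun n => (u n)⁻¹ * z * (u' n)) atTop (𝓝 z) := by
          simpa using hlim
        exact hlim'.congr fun n => (hkeq n).symm
      exact hz (hKc.mem_of_tendsto hkz (Filter.Eventually.of_forall hp2))
    obtain ⟨ε, hε, hsepP⟩ := hsepz
    set A : Set G := ball (1 : G) ε * (K : Set G) with hA
    have hAopen : IsOpen A := IsOpen.mul_right isOpen_ball
    have hAmem : (1 : G) ∈ A := ⟨1, mem_ball_self hε, 1, K.one_mem, mul_one 1⟩
    set A' : Set G := (fun y => z⁻¹ * y) ⁻¹' A with hA'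
    have hA'open : IsOpen A' := hAopen.preimage (continuous_const.mul continuous_id)
    have hAinv : ∀ x : G, ∀ kk ∈ K, (x * kk ∈ A ↔ x ∈ A) := by
      intro x kk hkk
      constructor
      · rintro ⟨v, hv, k2, hk2, hvk⟩
        have hvk' : v * k2 = x * kk := hvk
        refine ⟨v, hv, k2 * kk⁻¹, mul_mem hk2 (inv_mem hkk), ?_⟩
        show v * (k2 * kk⁻¹) = x
        rw [← mul_assoc, hvk', mul_assoc, mul_inv_cancel, mul_one]
      · rintro ⟨v, hv, k2, hk2, hvk⟩
        have hvk' : v * k2 = x := hvk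
        refine ⟨v, hv, k2 * kk, mul_mem hk2 hkk, ?_⟩
        show v * (k2 * kk) = x * kk
        rw [← mul_assoc, hvk']
    have hA'inv : ∀ x : G, ∀ kk ∈ K, (x * kk ∈ A' ↔ x ∈ A') := by
      intro x kk hkk
      show z⁻¹ * (x * kk) ∈ A ↔ z⁻¹ * x ∈ A
      rw [← mul_assoc]
      exact hAinv (z⁻¹ * x) kk hkk
    have hdisj : Disjoint A A' := by
      rw [Set.disjoint_left]
      intro w hwA hwA'
      obtain ⟨v, hv, kk, hkk, hvk⟩ := hwA
      have hvk' : v * kk = w := hvk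
      obtain ⟨v2, hv2, k2, hk2, he2⟩ := hwA'
      have he2' : v2 * k2 = z⁻¹ * w := he2
      refine hsepP v hv (kk * k2⁻¹) (mul_mem hkk (inv_mem hk2)) v2 hv2 ?_
      have h3 : z * (v2 * k2) = v * kk := by
        rw [he2', ← mul_assoc, mul_inv_cancel, one_mul, hvk']
      calc v * (kk * k2⁻¹) * v2⁻¹ = (v * kk) * k2⁻¹ * v2⁻¹ := by group
        _ = (z * (v2 * k2)) * k2⁻¹ * v2⁻¹ := by rw [h3]
        _ = z := by group
    obtain ⟨RK, hRK⟩ := hK.isBounded.subset_ball (1 : G)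
    have hRK0 : 0 < RK := by
      have h1 : (1 : G) ∈ ball (1 : G) RK := hRK K.one_mem
      simpa using mem_ball.mp h1
    set R : ℝ := dist z 1 + (ε + RK) + (ε + RK) + 1 with hRdef
    have hRpos : 0 < R := by
      have := dist_nonneg (x := z) (y := (1 : G))
      rw [hRdef]
      linarith
    have hsubA : A ⊆ ball (1 : G) (ε + RK) := by
      intro w hw
      obtain ⟨v, hv, kk, hkk, hvk⟩ := hw
      have hvk' : v * kk = w := hvk
      have h1 : dist v 1 < ε := mem_ball.mp hv
      have h2 : dist kk 1 < RK := mem_ball.mp (hRK hkk)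
      have h3 : dist (v * kk) v = dist kk 1 := by
        have h4 := hleft v kk 1
        simpa using h4
      rw [mem_ball, ← hvk']
      calc dist (v * kk) 1 ≤ dist (v * kk) v + dist v 1 := dist_triangle _ _ _
        _ = dist kk 1 + dist v 1 := by rw [h3]
        _ < RK + ε := by linarith
        _ ≤ ε + RK := by linarith
    have hAB : A ⊆ ball (1 : G) R := by
      refine subset_trans hsubA (ball_subset_ball ?_)
      have := dist_nonneg (x := z) (y := (1 : G))
      rw [hRdef]
      linarith
    have hA'B : A' ⊆ ball (1 : G) R := by
      intro w hw
      have h1 : z⁻¹ * w ∈ A := hw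
      have h2 : dist (z⁻¹ * w) 1 < ε + RK := mem_ball.mp (hsubA h1)
      have h4 : dist (z⁻¹ * w) (z⁻¹ * z) = dist w z := hleft z⁻¹ w z
      rw [inv_mul_cancel] at h4
      have h3 : dist w z < ε + RK := by rwa [h4] at h2
      rw [mem_ball]
      calc dist w 1 ≤ dist w z + dist z 1 := dist_triangle _ _ _
        _ < (ε + RK) + dist z 1 := by linarith
        _ ≤ R := by rw [hRdef]; linarith
    set B : Set G := ball (1 : G) R with hBdef
    have hB0 : ν B ≠ 0 := (IsOpen.measure_pos ν isOpen_ball ⟨1, mem_ball_self hRpos⟩).ne'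
    have hBt : ν B ≠ ⊤ := (hball 1 R).ne
    have hνA'A : ν A' = ν A := measure_preimage_mul ν z⁻¹ A
    set κ : ℝ := ((ν B).toReal)⁻¹ with hκ
    have hκpos : 0 < κ := inv_pos.mpr (ENNReal.toReal_pos hB0 hBt)
    set a₀ : G → ℂ := fun x => (κ : ℂ) *
      (A.indicator (fun _ => (1 : ℂ)) x - A'.indicator (fun _ => (1 : ℂ)) x) with ha₀
    have hAm : MeasurableSet A := hAopen.measurableSet
    have hA'm : MeasurableSet A' := hA'open.measurableSet
    have ha₀meas : Measurable a₀ :=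
      ((measurable_const.indicator hAm).sub (measurable_const.indicator hA'm)).const_mul _
    have hzeroout : ∀ x, x ∉ B → a₀ x = 0 := by
      intro x hxB
      have hxA : x ∉ A := fun h => hxB (hAB h)
      have hxA' : x ∉ A' := fun h => hxB (hA'B h)
      rw [ha₀]
      simp [Set.indicator_of_notMem hxA, Set.indicator_of_notMem hxA']
    have hbound : ∀ x, ‖a₀ x‖ ≤ ‖B.indicator (fun _ => (κ : ℂ)) x‖ := by
      intro x
      by_cases hxB : x ∈ B
      · rw [Set.indicator_of_mem hxB]
        have hd : ‖A.indicator (fun _ => (1 : ℂ)) x - A'.indicator (fun _ => (1 : ℂ)) x‖ ≤ 1 := by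
          by_cases h1 : x ∈ A <;> by_cases h2 : x ∈ A' <;>
            simp [Set.indicator_of_mem, Set.indicator_of_notMem, h1, h2]
        calc ‖a₀ x‖ = ‖(κ : ℂ)‖ * ‖A.indicator (fun _ => (1 : ℂ)) x -
              A'.indicator (fun _ => (1 : ℂ)) x‖ := norm_mul _ _
          _ ≤ ‖(κ : ℂ)‖ * 1 := mul_le_mul_of_nonneg_left hd (norm_nonneg _)
          _ = ‖(κ : ℂ)‖ := mul_one _
      · rw [hzeroout x hxB, Set.indicator_of_notMem hxB]
    have helq : eLpNorm a₀ q ν ≤ ν B ^ (1 / q.toReal - 1) := by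
      refine le_trans (eLpNorm_mono hbound) ?_
      refine le_trans (eLpNorm_indicator_const_le ((κ : ℂ)) q) ?_
      have hnn : ((‖(κ : ℂ)‖₊ : ℝ≥0) : ℝ≥0∞) = (ν B)⁻¹ := by
        rw [← ofReal_norm_eq_coe_nnnorm]
        rw [Complex.norm_real, Real.norm_eq_abs, abs_of_pos hκpos]
        rw [hκ, ENNReal.ofReal_inv_of_pos (ENNReal.toReal_pos hB0 hBt),
          ENNReal.ofReal_toReal hBt]
      rw [show ‖(κ : ℂ)‖ₑ = (ν B)⁻¹ from hnn, ← ENNReal.rpow_neg_one (ν B), ← ENNReal.rpow_add _ _ hB0 hBt]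
      apply le_of_eq
      congr 1
      ring
    have hAt : ν A < ⊤ := lt_of_le_of_lt (measure_mono hAB) (hball 1 R)
    have hA't : ν A' < ⊤ := lt_of_le_of_lt (measure_mono hA'B) (hball 1 R)
    have hiA : Integrable (A.indicator fun _ => (1 : ℂ)) ν :=
      (integrable_indicator_iff hAm).mpr ((integrableOn_const_iff).mpr (Or.inr hAt))
    have hiA' : Integrable (A'.indicator fun _ => (1 : ℂ)) ν :=
      (integrable_indicator_iff hA'm).mpr ((integrableOn_const_iff).mpr (Or.inr hA't))
    have hint : ∫ y, a₀ y ∂ν = 0 := by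
      rw [ha₀]
      rw [MeasureTheory.integral_const_mul]
      rw [integral_sub hiA hiA']
      rw [integral_indicator_const (1 : ℂ) hAm, integral_indicator_const (1 : ℂ) hA'm]
      rw [measureReal_def, measureReal_def, hνA'A]
      simp
    have hatom : IsAtom1q ν q a₀ := by
      refine ⟨ha₀meas.aestronglyMeasurable, Or.inl ⟨1, R, hRpos, ?_, helq, hint⟩⟩
      exact Function.support_subset_iff'.mpr hzeroout
    have hInv : RightInvariant K a₀ := by
      intro x kk hkk
      have h1 : A.indicator (fun _ => (1 : ℂ)) (x * kk) = A.indicator (fun _ => (1 : ℂ)) x := by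
        by_cases hx : x ∈ A
        · rw [Set.indicator_of_mem ((hAinv x kk hkk).mpr hx), Set.indicator_of_mem hx]
        · rw [Set.indicator_of_notMem (fun h => hx ((hAinv x kk hkk).mp h)),
            Set.indicator_of_notMem hx]
      have h2 : A'.indicator (fun _ => (1 : ℂ)) (x * kk) = A'.indicator (fun _ => (1 : ℂ)) x := by
        by_cases hx : x ∈ A'
        · rw [Set.indicator_of_mem ((hA'inv x kk hkk).mpr hx), Set.indicator_of_mem hx]
        · rw [Set.indicator_of_notMem (fun h => hx ((hA'inv x kk hkk).mp h)),
            Set.indicator_of_notMem hx]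
      rw [ha₀]
      simp only [h1, h2]
    set f₀ : G ⧸ K → ℂ := fun y => a₀ (Quotient.out y) with hf₀
    have hout : ∀ x : G, f₀ (QuotientGroup.mk x) = a₀ x := by
      intro x
      have h1 : ((Quotient.out (QuotientGroup.mk x : G ⧸ K) : G) : G ⧸ K)
          = (QuotientGroup.mk x : G ⧸ K) := QuotientGroup.out_eq' _
      have h2 : x⁻¹ * Quotient.out (QuotientGroup.mk x : G ⧸ K) ∈ K :=
        QuotientGroup.eq.mp h1.symm
      have h3 : x * (x⁻¹ * Quotient.out (QuotientGroup.mk x : G ⧸ K)) =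
          Quotient.out (QuotientGroup.mk x : G ⧸ K) := by group
      calc f₀ (QuotientGroup.mk x) = a₀ (Quotient.out (QuotientGroup.mk x : G ⧸ K)) := rfl
        _ = a₀ (x * (x⁻¹ * Quotient.out (QuotientGroup.mk x : G ⧸ K))) := by rw [h3]
        _ = a₀ x := hInv x _ h2
    set c₁ : ℕ → ℂ := fun j => if j = 0 then 1 else 0 with hc₁
    set a₁ : ℕ → G → ℂ := fun j => if j = 0 then a₀ else fun _ => 0 with ha₁
    have hdecomp : ∀ᵐ x ∂ν, f₀ (QuotientGroup.mk x) = ∑' j, c₁ j * a₁ j x := by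
      refine Filter.Eventually.of_forall fun x => ?_
      have hterm : (fun j => c₁ j * a₁ j x) = fun j => if j = 0 then a₀ x else 0 := by
        funext j
        by_cases hj : j = 0 <;> simp [hc₁, ha₁, hj]
      rw [hterm, tsum_ite_eq, hout]
    have hnorms : (fun j => ‖c₁ j‖) = fun j => if j = 0 then (1 : ℝ) else 0 := by
      funext j
      by_cases hj : j = 0 <;> simp [hc₁, hj]
    have hsummable : Summable fun j => ‖c₁ j‖ := by
      rw [hnorms]
      exact ⟨1, hasSum_ite_eq 0 1⟩
    have hnormle : hardyNorm ν K q f₀ ≤ 1 := by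
      have h := hardyNorm_le_decomp ν (q := q) (f := f₀) (c := c₁) (a := a₁)
        (fun j => by
          by_cases hj : j = 0
          · simpa [ha₁, hj] using hatom
          · simpa [ha₁, hj] using zero_isAtom ν (q := q))
        (fun j => by
          by_cases hj : j = 0
          · simpa [ha₁, hj] using hInv
          · intro x kk hkk; simp [ha₁, hj])
        hsummable hdecomp
      refine le_trans h ?_
      rw [hnorms, tsum_ite_eq]
      simp
    refine ⟨f₀, ne_top_of_le_ne_top (by simp) hnormle, ?_⟩
    intro hzero_ae
    have h0 : ∀ᵐ y ∂(ν.map (QuotientGroup.mk : G → G ⧸ K)), f₀ y = 0 := by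
      filter_upwards [hzero_ae] with y hy
      simpa using hy
    have h1 : ∀ᵐ x ∂ν, f₀ (QuotientGroup.mk x) = 0 :=
      ae_of_ae_map measurable_quotient_mk''.aemeasurable h0
    have h2 : ν {x : G | a₀ x ≠ 0} = 0 := by
      have hae : ∀ᵐ x ∂ν, a₀ x = 0 := by
        filter_upwards [h1] with x hx
        rwa [hout] at hx
      exact ae_iff.mp hae
    have h3 : A ⊆ {x : G | a₀ x ≠ 0} := by
      intro x hxA
      have hxA' : x ∉ A' := Set.disjoint_left.mp hdisj hxA
      simp only [Set.mem_setOf_eq, ha₀]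
      rw [Set.indicator_of_mem hxA, Set.indicator_of_notMem hxA']
      simp only [sub_zero, mul_one]
      exact_mod_cast hκpos.ne'
    exact (IsOpen.measure_pos ν hAopen ⟨1, hAmem⟩).ne'
      (measure_mono_null h3 h2)
  exact ⟨hnontriv, hsub, hsmul,
    fun f hf => hardyNorm_definite ν hball hq hK f hf, hcomplete⟩

end Stmt3
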